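/- Let n ≥ 2 be even. Then p_n(Z) - 2 = q_1(Z) · q_2(Z) · ∏_{d | n, d ∉ {1,2}} q_d(Z)², where p_n is the trace polynomial family, q_1(Z) = Z - 2, q_2(Z) = Z + 2, and q_d for d ≥ 3 is determined by g_d(X) = X^{φ(d)/2} q_d(X + 1/X). -/

import Mathlib

open Polynomial

noncomputable def tracePoly : ℕ → Polynomial ℂ
  | 0 => 1
  | 1 => X
  | 2 => X ^ 2 - 2
  | (n + 3) => X * tracePoly (n + 2) - tracePoly (n + 1)

theorem trace_eval (x : ℂ) (hx : x ≠ 0) :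
    ∀ n : ℕ, (tracePoly (n + 1)).eval (x + x⁻¹) = x ^ (n + 1) + (x⁻¹) ^ (n + 1)
  | 0 => by simp [tracePoly]
  | 1 => by
      simp only [tracePoly, eval_sub, eval_pow, eval_X, eval_ofNat]
      field_simp
      linear_combination (-(1 + x * x⁻¹)) * mul_inv_cancel₀ hx
  | (n + 2) => by
      have h1 := trace_eval x hx n
      have h2 := trace_eval x hx (n + 1)
      show (tracePoly (n + 3)).eval (x + x⁻¹) = _
      simp only [tracePoly, eval_sub, eval_mul, eval_X, h1, h2]
      field_simp
      linear_combination x⁻¹ ^ n * (x * x⁻¹ - x⁻¹ ^ 2) * mul_inv_cancel₀ hx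

theorem stmt10 (q : ℕ → Polynomial ℂ) (hq1 : q 1 = X - 2) (hq2 : q 2 = X + 2)
    (hq : ∀ d : ℕ, 3 ≤ d → ∀ x : ℂ, x ≠ 0 →
      (Polynomial.cyclotomic d ℂ).eval x = x ^ (Nat.totient d / 2) * (q d).eval (x + x⁻¹))
    (n : ℕ) (hn : 2 ≤ n) (heven : Even n) :
    tracePoly n - 2 = q 1 * q 2 * ∏ d ∈ n.divisors \ {1, 2}, (q d) ^ 2 := by
  have hn0 : 0 < n := by omega
  apply Polynomial.funext
  intro z
  -- find x with x + x⁻¹ = z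
  obtain ⟨x, hxroot⟩ : ∃ x : ℂ, (X ^ 2 - C z * X + 1 : Polynomial ℂ).IsRoot x := by
    apply Complex.exists_root
    have : (X ^ 2 - C z * X + 1 : Polynomial ℂ) = C 1 * X ^ 2 + C (-z) * X + C 1 := by
      simp; ring
    rw [this, Polynomial.degree_quadratic one_ne_zero]
    norm_num
  simp only [IsRoot, eval_add, eval_sub, eval_mul, eval_pow, eval_X, eval_C, eval_one] at hxroot
  have hx : x ≠ 0 := by
    rintro rfl
    simp at hxroot
  have hz : x + x⁻¹ = z := by
    field_simp
    linear_combination hxroot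
  -- LHS eval
  obtain ⟨m, rfl⟩ : ∃ m, n = m + 1 := ⟨n - 1, by omega⟩
  have hL : (tracePoly (m + 1)).eval z = x ^ (m + 1) + (x⁻¹) ^ (m + 1) := by
    rw [← hz]; exact trace_eval x hx m
  set n := m + 1 with hnm
  -- the set S
  set S := n.divisors \ {1, 2} with hS
  have hd3 : ∀ d ∈ S, 3 ≤ d := by
    intro d hd
    simp only [hS, Finset.mem_sdiff, Nat.mem_divisors, Finset.mem_insert,
      Finset.mem_singleton, not_or] at hd
    obtain ⟨⟨hdvd, -⟩, h1, h2⟩ := hd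
    have hd0 : d ≠ 0 := by
      rintro rfl
      exact absurd (Nat.eq_zero_of_zero_dvd hdvd) (by omega)
    omega
  have h12sub : ({1, 2} : Finset ℕ) ⊆ n.divisors := by
    intro d hd
    simp only [Finset.mem_insert, Finset.mem_singleton] at hd
    rcases hd with rfl | rfl
    · exact Nat.one_mem_divisors.2 (by omega)
    · exact Nat.mem_divisors.2 ⟨heven.two_dvd, by omega⟩
  have hsum : ∑ d ∈ S, Nat.totient d = n - 2 := by
    have h2 : ∑ d ∈ S, Nat.totient d + ∑ d ∈ ({1, 2} : Finset ℕ), Nat.totient d = n := by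
      rw [Finset.sum_sdiff h12sub]
      exact Nat.sum_totient n
    rw [Finset.sum_pair (by norm_num : (1:ℕ) ≠ 2)] at h2
    simp [Nat.totient_one] at h2
    omega
  set A : ℂ := ∏ d ∈ S, (Polynomial.cyclotomic d ℂ).eval x with hA
  set P : ℂ := ∏ d ∈ S, ((q d).eval z) ^ 2 with hP
  have key1 : (x - 1) * (x + 1) * A = x ^ n - 1 := by
    have h := Polynomial.prod_cyclotomic_eq_X_pow_sub_one hn0 ℂ
    have h2 := congrArg (Polynomial.eval x) h
    rw [Polynomial.eval_prod, eval_sub, eval_pow, eval_X, eval_one] at h2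
    rw [← Finset.prod_sdiff h12sub] at h2
    have h3 : ∏ d ∈ ({1, 2} : Finset ℕ), (Polynomial.cyclotomic d ℂ).eval x
        = (x - 1) * (x + 1) := by
      rw [Finset.prod_pair (by norm_num)]
      simp [Polynomial.cyclotomic_one, Polynomial.cyclotomic_two]
    rw [h3] at h2
    rw [← h2]; ring
  have key2 : A ^ 2 = x ^ (n - 2) * P := by
    rw [hA, ← Finset.prod_pow]
    have : ∀ d ∈ S, ((Polynomial.cyclotomic d ℂ).eval x) ^ 2
        = x ^ Nat.totient d * ((q d).eval z) ^ 2 := by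
      intro d hd
      rw [hq d (hd3 d hd) x hx, hz, mul_pow, ← pow_mul]
      have he : Even (Nat.totient d) := Nat.totient_even (by have := hd3 d hd; omega)
      rw [Nat.div_mul_cancel he.two_dvd]
    rw [Finset.prod_congr rfl this, Finset.prod_mul_distrib,
      Finset.prod_pow_eq_pow_sum, hsum]
  -- now compute
  have hR : ((q 1) * (q 2) * ∏ d ∈ S, (q d) ^ 2).eval z
      = (z - 2) * (z + 2) * P := by
    simp [hq1, hq2, hP, Polynomial.eval_prod]
  rw [eval_sub, hL, hR]
  have hxn : (x : ℂ) ^ n ≠ 0 := pow_ne_zero _ hx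
  apply mul_left_cancel₀ hxn
  have hinv : x * x⁻¹ = 1 := mul_inv_cancel₀ hx
  have hinvn : x ^ n * (x⁻¹) ^ n = 1 := by rw [← mul_pow, hinv, one_pow]
  have hsplit : x ^ n = x ^ (n - 2) * x ^ 2 := by
    rw [← pow_add]; congr 1; omega
  have e2 : eval z 2 = (2 : ℂ) := by simp
  rw [e2, ← hz]
  calc x ^ n * (x ^ n + x⁻¹ ^ n - 2)
      = (x ^ n) ^ 2 + x ^ n * x⁻¹ ^ n - 2 * x ^ n := by ring
    _ = (x ^ n - 1) ^ 2 := by rw [hinvn]; ring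
    _ = ((x - 1) * (x + 1) * A) ^ 2 := by rw [key1]
    _ = ((x - 1) * (x + 1)) ^ 2 * A ^ 2 := by ring
    _ = ((x - 1) * (x + 1)) ^ 2 * (x ^ (n - 2) * P) := by rw [key2]
    _ = x ^ (n - 2) * P * ((x - 1) * (x + 1)) ^ 2 := by ring
    _ = x ^ (n - 2) * P * ((x + x⁻¹ - 2) * (x + x⁻¹ + 2) * x ^ 2) := by
        have h4 : (x + x⁻¹ - 2) * (x + x⁻¹ + 2) * x ^ 2 = ((x - 1) * (x + 1)) ^ 2 := by
          field_simp
          ring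
        rw [h4]
    _ = x ^ n * ((x + x⁻¹ - 2) * (x + x⁻¹ + 2) * P) := by rw [hsplit]; ring
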